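/- Let P(Ā,B̄) be the parallel connection constraint matrix [[A,0,0],[a,1,b],[0,0,B]] of Ā = [[A,0],[a,1]] ∈ ℝ^{m₁×n₁} and B̄ = [[1,b],[0,B]] ∈ ℝ^{m₂×n₂}, and let 𝒫 = {(x,s,y) ≥ 0 : P(Ā,B̄)(x,s,y) = (c_A, c_a+c_b, c_B)} be a simple parallel-connection polyhedron. Then for every vertex (x,s,y) of 𝒫, exactly one of the following holds: (1) x has m₁ nonzero coordinates, s = 0, and y has m₂−1 nonzero coordinates; (2) x has m₁−1 nonzero coordinates, s > 0, and y has m₂−1 nonzero coordinates; (3) x has m₁−1 nonzero coordinates, s = 0, and y has m₂ nonzero coordinates. -/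
import Mathlib


open Set Matrix

noncomputable section

/-- A polyhedron in standard form `{x : Mx = c, x ≥ 0}`. -/
def stdPoly {ι κ : Type*} [Fintype ι] [Fintype κ] (M : Matrix ι κ ℝ) (c : ι → ℝ) :
    Set (κ → ℝ) := {x | M.mulVec x = c ∧ ∀ j, 0 ≤ x j}

/-- A vertex of a convex set: an extreme point. -/
def IsVertex {E : Type*} [AddCommGroup E] [Module ℝ E] (P : Set E) (v : E) : Prop :=
  v ∈ Set.extremePoints ℝ P

/-- Two vertices of `P` are adjacent if they are distinct and the segment
joining them is a face (an extreme subset) of `P`, i.e. an edge. -/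
def Adj {E : Type*} [AddCommGroup E] [Module ℝ E] (P : Set E) (u v : E) : Prop :=
  u ≠ v ∧ IsVertex P u ∧ IsVertex P v ∧ IsExtreme ℝ P (segment ℝ u v)

/-- There is an edge walk of length at most `k` between `u` and `v` in `P`. -/
def HasWalk {E : Type*} [AddCommGroup E] [Module ℝ E] (P : Set E) (u v : E) (k : ℕ) : Prop :=
  ∃ N ≤ k, ∃ f : ℕ → E, f 0 = u ∧ f N = v ∧ ∀ i < N, Adj P (f i) (f (i + 1))

/-- The combinatorial diameter of `P` is at most `k`. -/
def DiamLE {E : Type*} [AddCommGroup E] [Module ℝ E] (P : Set E) (k : ℕ) : Prop :=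
  ∀ u v, IsVertex P u → IsVertex P v → HasWalk P u v k

/-- `diam(M) ≤ k`: every standard-form polyhedron with constraint matrix `M`
has combinatorial diameter at most `k`, regardless of the right-hand side. -/
def MatDiamLE {ι κ : Type*} [Fintype ι] [Fintype κ] (M : Matrix ι κ ℝ) (k : ℕ) : Prop :=
  ∀ c, DiamLE (stdPoly M c) k

/-- Number of nonzero coordinates. -/
def suppCard {α : Type*} (x : α → ℝ) : ℕ := (Function.support x).ncard

/-- The matrix `Ā = [[A, 0], [a, 1]]`. -/
def Abar {mA nA : ℕ} (A : Matrix (Fin mA) (Fin nA) ℝ) (a : Fin nA → ℝ) :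
    Matrix (Fin mA ⊕ Unit) (Fin nA ⊕ Unit) ℝ :=
  Matrix.of fun i j =>
    match i, j with
    | Sum.inl i, Sum.inl j => A i j
    | Sum.inl _, Sum.inr _ => 0
    | Sum.inr _, Sum.inl j => a j
    | Sum.inr _, Sum.inr _ => 1

/-- The matrix `B̄ = [[1, b], [0, B]]`. -/
def Bbar {mB nB : ℕ} (B : Matrix (Fin mB) (Fin nB) ℝ) (b : Fin nB → ℝ) :
    Matrix (Unit ⊕ Fin mB) (Unit ⊕ Fin nB) ℝ :=
  Matrix.of fun i j =>
    match i, j with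
    | Sum.inl _, Sum.inl _ => 1
    | Sum.inl _, Sum.inr j => b j
    | Sum.inr _, Sum.inl _ => 0
    | Sum.inr i, Sum.inr j => B i j

/-- The parallel-connection polyhedron `𝒫`, with points written `(x, s, y)`. -/
def parallelPoly {mA nA mB nB : ℕ} (A : Matrix (Fin mA) (Fin nA) ℝ) (a : Fin nA → ℝ)
    (B : Matrix (Fin mB) (Fin nB) ℝ) (b : Fin nB → ℝ)
    (cA : Fin mA → ℝ) (ca cb : ℝ) (cB : Fin mB → ℝ) :
    Set ((Fin nA → ℝ) × ℝ × (Fin nB → ℝ)) :=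
  {p | A.mulVec p.1 = cA ∧ a ⬝ᵥ p.1 + p.2.1 + b ⬝ᵥ p.2.2 = ca + cb ∧
       B.mulVec p.2.2 = cB ∧ (∀ i, 0 ≤ p.1 i) ∧ 0 ≤ p.2.1 ∧ ∀ j, 0 ≤ p.2.2 j}

/-- Total number of nonzero coordinates of a point `(x, s, y)`. -/
def pSupp {nA nB : ℕ} (p : (Fin nA → ℝ) × ℝ × (Fin nB → ℝ)) : ℕ :=
  suppCard p.1 + (if p.2.1 = 0 then 0 else 1) + suppCard p.2.2

/-- (Categorization of the vertices of the parallel-connection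
polyhedron.)  With `m₁ = mA + 1` and `m₂ = mB + 1`, suppose any nonnegative solution of
`Ax = c_A` has at least `m₁ - 1 = mA` nonzero coordinates and any nonnegative solution of
`By = c_B` has at least `m₂ - 1 = mB` nonzero coordinates (simplicity of `Q` and `R`),
and suppose `𝒫` is simple: every vertex has exactly `m₁ + m₂ - 1 = mA + mB + 1` nonzero
coordinates.  Then every vertex `(x, s, y)` of `𝒫` falls into exactly one of the three
categories `(m₁, 0, m₂ - 1)`, `(m₁ - 1, 1, m₂ - 1)`, `(m₁ - 1, 0, m₂)`. -/
theorem parallel_vertex_categorization {mA nA mB nB : ℕ}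
    (A : Matrix (Fin mA) (Fin nA) ℝ) (a : Fin nA → ℝ)
    (B : Matrix (Fin mB) (Fin nB) ℝ) (b : Fin nB → ℝ)
    (cA : Fin mA → ℝ) (ca cb : ℝ) (cB : Fin mB → ℝ)
    (hA : ∀ x : Fin nA → ℝ, A.mulVec x = cA → (∀ i, 0 ≤ x i) → mA ≤ suppCard x)
    (hB : ∀ y : Fin nB → ℝ, B.mulVec y = cB → (∀ j, 0 ≤ y j) → mB ≤ suppCard y)
    (hsimple : ∀ p, IsVertex (parallelPoly A a B b cA ca cb cB) p →
      pSupp p = mA + mB + 1)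
    (p : (Fin nA → ℝ) × ℝ × (Fin nB → ℝ))
    (hp : IsVertex (parallelPoly A a B b cA ca cb cB) p) :
    (suppCard p.1 = mA + 1 ∧ p.2.1 = 0 ∧ suppCard p.2.2 = mB) ∨
    (suppCard p.1 = mA ∧ 0 < p.2.1 ∧ suppCard p.2.2 = mB) ∨
    (suppCard p.1 = mA ∧ p.2.1 = 0 ∧ suppCard p.2.2 = mB + 1) := by
  obtain ⟨h1, -, h3, h4, h5, h6⟩ := hp.1
  have hx : mA ≤ suppCard p.1 := hA _ h1 h4
  have hy : mB ≤ suppCard p.2.2 := hB _ h3 h6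
  have htot := hsimple p hp
  unfold pSupp at htot
  by_cases hs : p.2.1 = 0
  · simp [hs] at htot
    by_cases hx1 : suppCard p.1 = mA
    · right; right; exact ⟨hx1, hs, by omega⟩
    · left; exact ⟨by omega, hs, by omega⟩
  · have hpos : 0 < p.2.1 := lt_of_le_of_ne h5 (Ne.symm hs)
    simp [hs] at htot
    right; left
    refine ⟨by omega, hpos, by omega⟩
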